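/- Let A : X → X be a linear operator on a finite-dimensional real vector space. The following are equivalent: (i) A is nilpotent; (ii) A and αA are similar for every nonzero real α; (iii) A and αA are similar for some real α > 1. -/

import Mathlib

open Polynomial LinearMap

universe u

/-- Key construction: if `A ^ n = 0` then `A` is similar to `α • A`, with control of the
similarity on a subspace `W` disjoint from `ker (A ^ (n-1))`. -/
lemma aux_nil (α : ℝ) (hα : α ≠ 0) (n : ℕ) :
    ∀ {X : Type u} [AddCommGroup X] [Module ℝ X] (A : X →ₗ[ℝ] X), A ^ n = 0 →
      ∀ W : Submodule ℝ X, Disjoint W (LinearMap.ker (A ^ (n - 1))) →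
        ∃ H : X ≃ₗ[ℝ] X, (∀ x, H (A x) = α • A (H x)) ∧
          ∀ w ∈ W, H w = (α⁻¹) ^ (n - 1) • w := by
  induction n with
  | zero =>
    intro X _ _ A h0 W _
    have hx : ∀ x : X, x = 0 := by
      intro x
      have : (A ^ 0) x = (0 : X →ₗ[ℝ] X) x := by rw [h0]
      simpa using this
    refine ⟨LinearEquiv.refl ℝ X, fun x => ?_, fun w _ => ?_⟩
    · simp [hx (A x), hx (A (LinearEquiv.refl ℝ X x))]
    · simp
  | succ n ih =>
    intro X _ _ A hA W hW
    rcases Nat.eq_zero_or_pos n with rfl | hn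
    · -- here A = 0; take H = id
      refine ⟨LinearEquiv.refl ℝ X, fun x => ?_, fun w _ => ?_⟩
      · have hA0 : A = 0 := by simpa using hA
        simp [hA0]
      · simp
    -- main case : n ≥ 1
    set K : Submodule ℝ X := LinearMap.ker (A ^ n) with hK
    have hWK : Disjoint W K := by simpa using hW
    -- extend W to a complement W' of K
    obtain ⟨W₀, hW₀⟩ := (K ⊔ W).exists_isCompl
    set W' : Submodule ℝ X := W ⊔ W₀ with hW'def
    have hWW' : W ≤ W' := le_sup_left
    have hcompl : IsCompl K W' := by
      constructor
      · rw [disjoint_iff_inf_le]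
        rintro x ⟨hxK, hxW'⟩
        obtain ⟨w, hw, w₀, hw₀, rfl⟩ := Submodule.mem_sup.mp hxW'
        have hw₀0 : w₀ = 0 := by
          have : w₀ ∈ (K ⊔ W) ⊓ W₀ := by
            constructor
            · have : w₀ = (w + w₀) - w := by abel
              rw [this]
              exact Submodule.sub_mem _ (le_sup_left (a := K) (b := W) hxK)
                (le_sup_right (a := K) (b := W) hw)
            · exact hw₀
          simpa using hW₀.disjoint.le_bot this
        subst hw₀0
        have hw0 : w = 0 := by
          have : w ∈ W ⊓ K := ⟨hw, by simpa using hxK⟩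
          simpa using hWK.symm.le_bot ⟨this.2, this.1⟩
        simp [hw0]
      · rw [codisjoint_iff]
        have : K ⊔ W' = (K ⊔ W) ⊔ W₀ := by rw [hW'def, sup_assoc]
        rw [this, hW₀.codisjoint.eq_top]
    -- A maps everything into K, and maps K into K
    have hrange : ∀ x : X, A x ∈ K := by
      intro x
      have : (A ^ (n + 1)) x = 0 := by rw [hA]; rfl
      simp only [hK, LinearMap.mem_ker]
      rw [← Module.End.mul_apply, ← pow_succ]
      exact this
    have hKinv : ∀ x ∈ K, A x ∈ K := fun x _ => hrange x
    set B : K →ₗ[ℝ] K := A.restrict hKinv with hB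
    have hBpow : B ^ n = 0 := by
      rw [hB, Module.End.pow_restrict n hKinv]
      ext ⟨x, hx⟩
      have hx' : (A ^ n) x = 0 := hx
      simp [LinearMap.restrict_apply, hx']
    -- the image of W' inside K
    set g : X →ₗ[ℝ] K := A.codRestrict K hrange with hg
    set W₂ : Submodule ℝ K := W'.map g with hW₂
    have hW₂disj : Disjoint W₂ (LinearMap.ker (B ^ (n - 1))) := by
      rw [disjoint_iff_inf_le]
      rintro y ⟨hy₂, hyk⟩
      obtain ⟨w, hw, rfl⟩ := hy₂
      have hy : (B ^ (n - 1)) (g w) = 0 := hyk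
      have hcoe : ((B ^ (n - 1)) (g w) : X) = (A ^ (n - 1)) (A w) := by
        rw [hB, Module.End.pow_restrict (n - 1) hKinv, LinearMap.restrict_apply]
        rfl
      have : (A ^ n) w = 0 := by
        have h1 : (A ^ (n - 1)) (A w) = 0 := by rw [← hcoe, hy]; rfl
        have h2 : (A ^ ((n - 1) + 1)) w = 0 := by
          rw [pow_succ, Module.End.mul_apply]
          exact h1
        rwa [Nat.sub_add_cancel hn] at h2
      have hwK : w ∈ K := this
      have : w = 0 := by
        have := hcompl.disjoint.le_bot ⟨hwK, hw⟩
        simpa using this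
      simp [this]
    obtain ⟨HK, hHK1, hHK2⟩ := ih B hBpow W₂ hW₂disj
    -- assemble H
    set S : W' ≃ₗ[ℝ] W' :=
      LinearEquiv.smulOfNeZero ℝ W' ((α⁻¹) ^ n) (pow_ne_zero _ (inv_ne_zero hα)) with hS
    set e : (K × W') ≃ₗ[ℝ] X := Submodule.prodEquivOfIsCompl K W' hcompl with he
    set H : X ≃ₗ[ℝ] X := e.symm ≪≫ₗ (HK.prodCongr S) ≪≫ₗ e with hH
    have hHmemK : ∀ y : K, H (y : X) = ((HK y : K) : X) := by
      intro y
      rw [hH]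
      simp [he, Submodule.prodEquivOfIsCompl_symm_apply_left, LinearEquiv.prodCongr_apply]
    have hHmemW' : ∀ y : W', H (y : X) = (α⁻¹) ^ n • (y : X) := by
      intro y
      have h0 : H (y : X) = ((S y : W') : X) := by
        rw [hH]
        simp [he, Submodule.prodEquivOfIsCompl_symm_apply_right, LinearEquiv.prodCongr_apply]
      rw [h0, hS, LinearEquiv.smulOfNeZero_apply]
      simp
    refine ⟨H, fun x => ?_, fun w hw => ?_⟩
    · -- decompose x
      obtain ⟨⟨k, w'⟩, rfl⟩ : ∃ p : K × W', e p = x := ⟨e.symm x, e.apply_symm_apply x⟩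
      have hx : e (k, w') = (k : X) + (w' : X) := rfl
      rw [hx]
      rw [map_add, map_add, map_add]
      -- A k = B k, A w' = g w' as elements of K
      have hAk : A (k : X) = ((B k : K) : X) := rfl
      have hAw' : A (w' : X) = ((g (w' : X) : K) : X) := rfl
      rw [hAk, hAw', hHmemK (B k), hHmemK (g (w' : X)), hHmemK k, hHmemW' w']
      have h1 : ((HK (B k) : K) : X) = α • A ((HK k : K) : X) := by
        rw [hHK1 k]
        simp only [SetLike.val_smul]
        congr 1
      have h2 : ((HK (g (w' : X)) : K) : X) = (α⁻¹) ^ (n - 1) • A (w' : X) := by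
        rw [hHK2 (g (w' : X)) ⟨(w' : X), w'.2, rfl⟩]
        simp only [SetLike.val_smul]
        congr 1
      rw [h1, h2]
      have h3 : α * α⁻¹ ^ n = α⁻¹ ^ (n - 1) := by
        conv_lhs => rw [← Nat.sub_add_cancel hn]
        rw [pow_succ', ← mul_assoc, mul_inv_cancel₀ hα, one_mul]
      rw [map_add, map_smul, smul_add, smul_smul, h3]
    · rw [show (w : X) = ((⟨w, hWW' hw⟩ : W') : X) from rfl, hHmemW']
      simp
  
/-- Forward direction: nilpotent implies similar to every nonzero multiple. -/
lemma nilpotent_similar {X : Type u} [AddCommGroup X] [Module ℝ X]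
    (A : X →ₗ[ℝ] X) (hA : IsNilpotent A) (α : ℝ) (hα : α ≠ 0) :
    ∃ H : X ≃ₗ[ℝ] X, ∀ x, H (A x) = (α • A) (H x) := by
  obtain ⟨n, hn⟩ := hA
  obtain ⟨H, h1, _⟩ := aux_nil α hα n A hn ⊥ disjoint_bot_left
  exact ⟨H, fun x => by rw [h1 x]; simp⟩

lemma coeff_comp_C_mul_X (p : ℝ[X]) (α : ℝ) (k : ℕ) :
    (p.comp (C α * X)).coeff k = α ^ k * p.coeff k := by
  induction p using Polynomial.induction_on' with
  | add p q hp hq => simp [Polynomial.add_comp, hp, hq, mul_add]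
  | monomial i a =>
    rw [monomial_comp]
    rw [mul_pow, ← C_pow, ← mul_assoc, ← C_mul]
    rw [coeff_C_mul, coeff_X_pow, coeff_monomial]
    rcases eq_or_ne i k with rfl | h
    · simp [mul_comm]
    · simp [h, Ne.symm h]

lemma smul_charpoly {m : ℕ} (α : ℝ) (M : Matrix (Fin m) (Fin m) ℝ) :
    (α • M).charpoly.comp (C α * X) = C α ^ m * M.charpoly := by
  rw [Matrix.charpoly, Matrix.charpoly, ← coe_compRingHom_apply, RingHom.map_det]
  have key : (compRingHom (C α * X)).mapMatrix (Matrix.charmatrix (α • M)) =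
      (C α) • Matrix.charmatrix M := by
    apply Matrix.ext
    intro i j
    rcases eq_or_ne i j with rfl | h
    · simp only [RingHom.mapMatrix_apply, Matrix.map_apply, Matrix.charmatrix_apply_eq,
        Matrix.smul_apply, coe_compRingHom_apply, Polynomial.sub_comp, X_comp, C_comp,
        smul_eq_mul]
      rw [C_mul]
      ring
    · simp only [RingHom.mapMatrix_apply, Matrix.map_apply, Matrix.charmatrix_apply_ne _ _ _ h,
        Matrix.smul_apply, coe_compRingHom_apply, Polynomial.neg_comp, C_comp, smul_eq_mul]
      rw [C_mul]
      ring
  rw [key, Matrix.det_smul]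
  simp

/-- Reverse direction: similar to `α • A` for some `α > 1` implies nilpotent. -/
lemma similar_nilpotent {X : Type u} [AddCommGroup X] [Module ℝ X] [FiniteDimensional ℝ X]
    (A : X →ₗ[ℝ] X) (α : ℝ) (hα : 1 < α) (H : X ≃ₗ[ℝ] X)
    (hH : ∀ x, H (A x) = (α • A) (H x)) : IsNilpotent A := by
  have hα0 : (0:ℝ) < α := lt_trans one_pos hα
  have hconj : H.conj A = α • A := by
    ext x
    rw [LinearEquiv.conj_apply]
    simp only [LinearMap.coe_comp, Function.comp_apply, LinearEquiv.coe_coe]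
    rw [hH (H.symm x), LinearEquiv.apply_symm_apply]
  have hcp : (α • A).charpoly = A.charpoly := by
    rw [← hconj]; exact H.charpoly_conj A
  set n := Module.finrank ℝ X with hn
  set b := Module.finBasis ℝ X with hb
  set M := LinearMap.toMatrix b b A with hM
  have hMA : A.charpoly = M.charpoly := (LinearMap.charpoly_toMatrix A b).symm
  have hMsmul : (α • A).charpoly = (α • M).charpoly := by
    rw [← LinearMap.charpoly_toMatrix (α • A) b, map_smul, ← hM]
  have hMcp : (α • M).charpoly = M.charpoly := by rw [← hMsmul, hcp, hMA]
  have hkey : M.charpoly.comp (C α * Polynomial.X) = C α ^ n * M.charpoly := by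
    have h := smul_charpoly α M
    rw [hMcp] at h
    exact h
  have hcoeff : ∀ k, α ^ k * M.charpoly.coeff k = α ^ n * M.charpoly.coeff k := by
    intro k
    have h1 := coeff_comp_C_mul_X M.charpoly α k
    rw [hkey] at h1
    rw [← C_pow, coeff_C_mul] at h1
    linarith [h1]
  have hzero : ∀ k < n, M.charpoly.coeff k = 0 := by
    intro k hk
    have h := hcoeff k
    have hne : α ^ k ≠ α ^ n := ne_of_lt (pow_lt_pow_right₀ hα hk)
    by_contra hc
    exact hne (mul_right_cancel₀ hc h)
  have hdeg : A.charpoly.natDegree = n := LinearMap.charpoly_natDegree A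
  have hmonic : A.charpoly.Monic := LinearMap.charpoly_monic A
  rw [LinearMap.isNilpotent_iff_charpoly]
  ext k
  rw [coeff_X_pow]
  rcases lt_trichotomy k n with h | rfl | h
  · rw [hMA, hzero k h, if_neg (ne_of_lt h)]
  · rw [if_pos rfl, ← hdeg]
    exact hmonic.coeff_natDegree
  · rw [if_neg (ne_of_gt h), coeff_eq_zero_of_natDegree_lt]
    rw [hdeg]; exact h

/-- For a linear operator `A` on a finite-dimensional real vector space,
the following are equivalent: (i) `A` is nilpotent; (ii) `A` and `α • A` are similar
for every `α ≠ 0`; (iii) `A` and `α • A` are similar for some `α > 1`. -/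
theorem stmt1 {X : Type*} [AddCommGroup X] [Module ℝ X] [FiniteDimensional ℝ X]
    (A : X →ₗ[ℝ] X) :
    ((IsNilpotent A ↔
        ∀ α : ℝ, α ≠ 0 → ∃ H : X ≃ₗ[ℝ] X, ∀ x, H (A x) = (α • A) (H x)) ∧
      (IsNilpotent A ↔
        ∃ α : ℝ, 1 < α ∧ ∃ H : X ≃ₗ[ℝ] X, ∀ x, H (A x) = (α • A) (H x))) := by
  constructor
  · constructor
    · intro h α hα
      exact nilpotent_similar A h α hα
    · intro h
      obtain ⟨H, hH⟩ := h 2 (by norm_num)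
      exact similar_nilpotent A 2 one_lt_two H hH
  · constructor
    · intro h
      exact ⟨2, one_lt_two, nilpotent_similar A h 2 (by norm_num)⟩
    · rintro ⟨α, hα, H, hH⟩
      exact similar_nilpotent A α hα H hH
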